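/- Under hypotheses H(A), H(J), H(γ,f) and (H_s), for every fixed w ∈ V the functional v ↦ ℒ(w,v) = F_A(v) − ⟨f,v⟩ + J(γw, γv) is strictly convex on V. -/

import Mathlib

open Filter Topology

/-- Clarke generalized directional derivative of `j` at `x` in direction `v`. -/
noncomputable def clarkeDeriv {Y : Type*} [NormedAddCommGroup Y] [NormedSpace ℝ Y]
    (j : Y → ℝ) (x v : Y) : ℝ :=
  Filter.limsup (fun p : Y × ℝ => (j (p.1 + p.2 • v) - j p.1) / p.2)
    ((nhds x) ×ˢ (nhdsWithin (0 : ℝ) (Set.Ioi (0 : ℝ))))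

/-- Clarke generalized subdifferential of `j` at `x`. -/
noncomputable def clarkeSubdiff {Y : Type*} [NormedAddCommGroup Y] [NormedSpace ℝ Y]
    (j : Y → ℝ) (x : Y) : Set (Y →L[ℝ] ℝ) :=
  {ξ : Y →L[ℝ] ℝ | ∀ v : Y, ξ v ≤ clarkeDeriv j x v}

/-- Eventual bound on right difference quotients by a scaled Clarke derivative. -/
lemma eventually_quot_lt {X : Type*} [NormedAddCommGroup X] [NormedSpace ℝ X]
    {j : X → ℝ} (hj : LocallyLipschitz j) (p E : X) {c r : ℝ} (hc : 0 < c)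
    (hr : clarkeDeriv j p (c • E) < c * r) :
    ∀ᶠ l in 𝓝[>] (0:ℝ), (j (p + l • E) - j p) / l < r := by
  obtain ⟨K, s, hs_mem, hK⟩ := hj p
  obtain ⟨ε, hε, hball⟩ := Metric.mem_nhds_iff.mp hs_mem
  set M := c • E with hM
  set Q : X × ℝ → ℝ := fun q => (j (q.1 + q.2 • M) - j q.1) / q.2 with hQdef
  set δ := ε / (2 * (‖M‖ + 1)) with hδ
  have hδpos : 0 < δ := by
    apply div_pos hε
    positivity
  have hev : ∀ᶠ q in ((𝓝 p) ×ˢ (𝓝[>] (0:ℝ))), |Q q| ≤ K * ‖M‖ := by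
    filter_upwards [Filter.prod_mem_prod (Metric.ball_mem_nhds p (half_pos hε))
      (Ioo_mem_nhdsGT hδpos)] with q hq
    obtain ⟨hq1, hq2⟩ := hq
    have hq2pos : 0 < q.2 := hq2.1
    have hnorm : ‖q.2 • M‖ < ε / 2 := by
      rw [norm_smul, Real.norm_eq_abs, abs_of_pos hq2pos]
      have h1 : q.2 * ‖M‖ ≤ q.2 * (‖M‖ + 1) := by nlinarith
      have h2 : q.2 * (‖M‖ + 1) < δ * (‖M‖ + 1) := by
        have : (0:ℝ) < ‖M‖ + 1 := by positivity
        exact mul_lt_mul_of_pos_right hq2.2 this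
      have h3 : δ * (‖M‖ + 1) = ε / 2 := by
        rw [hδ]; field_simp
      linarith
    have hq1b : q.1 ∈ Metric.ball p ε := by
      have := Metric.mem_ball.mp hq1; exact Metric.mem_ball.mpr (by linarith)
    have hq1s : q.1 ∈ s := hball hq1b
    have hq2s : q.1 + q.2 • M ∈ s := by
      apply hball
      rw [Metric.mem_ball]
      calc dist (q.1 + q.2 • M) p ≤ dist (q.1 + q.2 • M) q.1 + dist q.1 p := dist_triangle _ _ _
        _ < ε / 2 + ε / 2 := by
            apply add_lt_add_of_lt_of_lt _ (Metric.mem_ball.mp hq1)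
            rw [dist_eq_norm]; simpa using hnorm
        _ = ε := by ring
    have hlip := hK.dist_le_mul _ hq2s _ hq1s
    rw [Real.dist_eq] at hlip
    have hd : dist (q.1 + q.2 • M) q.1 = q.2 * ‖M‖ := by
      rw [dist_eq_norm, add_sub_cancel_left, norm_smul, Real.norm_eq_abs, abs_of_pos hq2pos]
    rw [hd] at hlip
    have : |Q q| = |j (q.1 + q.2 • M) - j q.1| / q.2 := by
      rw [hQdef]; simp [abs_div, abs_of_pos hq2pos]
    rw [this]
    rw [div_le_iff₀ hq2pos]
    calc |j (q.1 + q.2 • M) - j q.1| ≤ K * (q.2 * ‖M‖) := hlip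
      _ = K * ‖M‖ * q.2 := by ring
  have hbdd : IsBoundedUnder (· ≤ ·) ((𝓝 p) ×ˢ (𝓝[>] (0:ℝ))) Q :=
    isBoundedUnder_of_eventually_le (hev.mono fun q h => (abs_le.1 h).2)
  have hr' : Filter.limsup Q ((𝓝 p) ×ˢ (𝓝[>] (0:ℝ))) < c * r := hr
  have hlt := eventually_lt_of_limsup_lt hr' hbdd
  have hmap : Tendsto (fun l : ℝ => ((p, l / c) : X × ℝ)) (𝓝[>] (0:ℝ))
      ((𝓝 p) ×ˢ (𝓝[>] (0:ℝ))) := by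
    refine Tendsto.prodMk tendsto_const_nhds ?_
    apply tendsto_nhdsWithin_of_tendsto_nhds_of_eventually_within
    · have : Tendsto (fun l : ℝ => l / c) (𝓝 0) (𝓝 (0 / c)) := tendsto_id.div_const c
      simpa using this.mono_left nhdsWithin_le_nhds
    · filter_upwards [self_mem_nhdsWithin] with l hl
      exact div_pos hl hc
  have key := hmap.eventually hlt
  filter_upwards [key, self_mem_nhdsWithin] with l hQl hl
  have hl0 : (0:ℝ) < l := hl
  have hsmul : (l / c) • M = l • E := by
    rw [hM, smul_smul, div_mul_cancel₀ _ hc.ne']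
  rw [hQdef] at hQl
  simp only [hsmul] at hQl
  -- hQl : (j (p + l • E) - j p) / (l / c) < c * r
  set N := j (p + l • E) - j p with hN
  have heq : N / (l / c) = (N / l) * c := by
    field_simp
  rw [heq] at hQl
  rw [mul_comm c r] at hQl
  exact (mul_lt_mul_iff_of_pos_right hc).mp hQl

/-- Shift lemma for line derivatives. -/
lemma hasDerivAt_line {V : Type*} [NormedAddCommGroup V] [NormedSpace ℝ V]
    {F : V → ℝ} {A : V → V →L[ℝ] ℝ}
    (hA : ∀ u v : V, HasLineDerivAt ℝ F (A u v) u v) (P E : V) (t : ℝ) :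
    HasDerivAt (fun s : ℝ => F (P + s • E)) (A (P + t • E) E) t := by
  have h : HasDerivAt (fun u : ℝ => F (P + t • E + u • E)) (A (P + t • E) E) 0 := hA (P + t • E) E
  have hinner : HasDerivAt (fun s : ℝ => s - t) 1 t := (hasDerivAt_id t).sub_const t
  have h2 : HasDerivAt ((fun u : ℝ => F (P + t • E + u • E)) ∘ (fun s : ℝ => s - t))
      (A (P + t • E) E * 1) t := HasDerivAt.comp t (by simpa using h) hinner
  rw [mul_one] at h2
  have hfun : ((fun u : ℝ => F (P + t • E + u • E)) ∘ (fun s : ℝ => s - t))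
      = fun s : ℝ => F (P + s • E) := by
    funext s
    simp only [Function.comp]
    congr 1
    rw [add_assoc, ← add_smul]
    congr 1
    ring
  rwa [hfun] at h2

set_option maxHeartbeats 1600000 in
theorem stmt1
    {V : Type*} [NormedAddCommGroup V] [NormedSpace ℝ V] [CompleteSpace V]
    {X : Type*} [NormedAddCommGroup X] [NormedSpace ℝ X] [CompleteSpace X]
    (hV_refl : Function.Surjective (NormedSpace.inclusionInDoubleDual ℝ V))
    (A : V → V →L[ℝ] ℝ) (F_A : V → ℝ) (L_A : ℝ) (hL_A : 0 < L_A)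
    (hA_lip : ∀ u v : V, ‖A u - A v‖ ≤ L_A * ‖u - v‖)
    (hA_pot : ∀ u v : V, HasLineDerivAt ℝ F_A (A u v) u v)
    (m_A : ℝ) (hm_A : 0 < m_A)
    (hA_mono : ∀ u v : V, m_A * ‖u - v‖ ^ 2 ≤ (A u - A v) (u - v))
    (J : X → X → ℝ)
    (hJ_lip : ∀ w : X, LocallyLipschitz (J w))
    (c₀ c₁ c₂ : ℝ) (hc₀ : 0 ≤ c₀) (hc₁ : 0 ≤ c₁) (hc₂ : 0 ≤ c₂)
    (hJ_bdd : ∀ w v : X, ∀ ξ ∈ clarkeSubdiff (J w) v, ‖ξ‖ ≤ c₀ + c₁ * ‖v‖ + c₂ * ‖w‖)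
    (m_α m_L : ℝ) (hm_α : 0 ≤ m_α) (hm_L : 0 ≤ m_L)
    (hJ_mono : ∀ w₁ w₂ v₁ v₂ : X,
      clarkeDeriv (J w₁) v₁ (v₂ - v₁) + clarkeDeriv (J w₂) v₂ (v₁ - v₂)
        ≤ m_α * ‖v₁ - v₂‖ ^ 2 + m_L * ‖w₁ - w₂‖ * ‖v₁ - v₂‖)
    (γ : V →L[ℝ] X) (f : V →L[ℝ] ℝ)
    (hs : (m_α + m_L) * ‖γ‖ ^ 2 < m_A)
    (w : V) :
    StrictConvexOn ℝ (Set.univ : Set V) (fun v : V => F_A v - f v + J (γ w) (γ v)) := by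
  refine ⟨convex_univ, ?_⟩
  intro x _ y _ hxy a b ha hb hab
  set D := y - x with hD
  have hD0 : D ≠ 0 := sub_ne_zero.mpr (Ne.symm hxy)
  have hDpos : 0 < ‖D‖ := norm_pos_iff.mpr hD0
  set K : ℝ := (m_A - m_α * ‖γ‖ ^ 2) * ‖D‖ ^ 2 with hKdef
  have hKpos : 0 < K := by
    have h1 : m_α * ‖γ‖ ^ 2 ≤ (m_α + m_L) * ‖γ‖ ^ 2 := by nlinarith [sq_nonneg ‖γ‖]
    have h2 : 0 < m_A - m_α * ‖γ‖ ^ 2 := by linarith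
    rw [hKdef]
    exact mul_pos h2 (pow_pos hDpos 2)
  have hb' : b = 1 - a := by linarith
  set v₁ : ℝ → V := fun t => x + t • (b • D) with hv₁
  set v₂ : ℝ → V := fun t => y + t • (a • (x - y)) with hv₂
  have hv21 : ∀ t : ℝ, v₂ t - v₁ t = (1 - t) • D := by
    intro t
    simp only [hv₁, hv₂, hD]
    rw [hb']
    module
  set g₁ : ℝ → ℝ := fun t => F_A (v₁ t) with hg₁
  set g₂ : ℝ → ℝ := fun t => F_A (v₂ t) with hg₂
  set h₁ : ℝ → ℝ := fun t => J (γ w) (γ (v₁ t)) with hh₁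
  set h₂ : ℝ → ℝ := fun t => J (γ w) (γ (v₂ t)) with hh₂
  set ψ : ℝ → ℝ := fun t => a * g₁ t + b * g₂ t + a * h₁ t + b * h₂ t with hψ
  have hg₁d : ∀ t : ℝ, HasDerivAt g₁ (A (v₁ t) (b • D)) t := fun t =>
    hasDerivAt_line hA_pot x (b • D) t
  have hg₂d : ∀ t : ℝ, HasDerivAt g₂ (A (v₂ t) (a • (x - y))) t := fun t =>
    hasDerivAt_line hA_pot y (a • (x - y)) t
  have hv₁c : Continuous v₁ := by
    simp only [hv₁]; exact continuous_const.add (continuous_id.smul continuous_const)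
  have hv₂c : Continuous v₂ := by
    simp only [hv₂]; exact continuous_const.add (continuous_id.smul continuous_const)
  have hjc : Continuous (J (γ w)) := (hJ_lip (γ w)).continuous
  have hψc : ContinuousOn ψ (Set.Icc (0:ℝ) 1) := by
    apply Continuous.continuousOn
    have c1 : Continuous g₁ := continuous_iff_continuousAt.mpr fun t => (hg₁d t).continuousAt
    have c2 : Continuous g₂ := continuous_iff_continuousAt.mpr fun t => (hg₂d t).continuousAt
    have c3 : Continuous h₁ := hjc.comp (γ.continuous.comp hv₁c)
    have c4 : Continuous h₂ := hjc.comp (γ.continuous.comp hv₂c)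
    simp only [hψ]
    fun_prop
  have hshift₁ : ∀ t z : ℝ, γ (v₁ z) = γ (v₁ t) + (z - t) • (b • γ D) := by
    intro t z
    simp only [hv₁, map_add, map_smul]
    module
  have hshift₂ : ∀ t z : ℝ, γ (v₂ z) = γ (v₂ t) + (z - t) • (a • γ (x - y)) := by
    intro t z
    simp only [hv₂, map_add, map_smul]
    module
  have main : ∀ s ∈ Set.Icc (0:ℝ) 1, ψ s ≤ ψ 0 + (a * b * K) * (s ^ 2 / 2 - s) := by
    intro s hs
    refine image_le_of_liminf_slope_right_le_deriv_boundary (f := ψ) (a := (0:ℝ)) (b := (1:ℝ))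
      (B := fun u : ℝ => ψ 0 + (a * b * K) * (u ^ 2 / 2 - u))
      (B' := fun u : ℝ => (a * b * K) * (u - 1)) hψc ?_ ?_ ?_ ?_ hs
    · norm_num
    · apply Continuous.continuousOn; fun_prop
    · intro t _
      have hB : HasDerivAt (fun u : ℝ => ψ 0 + (a * b * K) * (u ^ 2 / 2 - u))
          ((a * b * K) * (t - 1)) t := by
        have h1 : HasDerivAt (fun u : ℝ => u ^ 2 / 2 - u) (t - 1) t := by
          have h0 := ((hasDerivAt_pow 2 t).div_const 2).sub (hasDerivAt_id t)
          norm_num at h0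
          exact h0
        exact (h1.const_mul (a * b * K)).const_add (ψ 0)
      exact hB.hasDerivWithinAt
    · -- the slope bound
      intro t ht r hr
      apply Filter.Eventually.frequently
      have hr' : (a * b * K) * (t - 1) < r := hr
      have ht1 : 0 < 1 - t := by have := ht.2; simp only [Set.mem_Ico] at ht; linarith [ht.2]
      set ε := (r - (a * b * K) * (t - 1)) / 5 with hεdef
      have hεpos : 0 < ε := by rw [hεdef]; linarith
      set L₁ := clarkeDeriv (J (γ w)) (γ (v₁ t)) (γ (v₂ t) - γ (v₁ t)) with hL₁
      set L₂ := clarkeDeriv (J (γ w)) (γ (v₂ t)) (γ (v₁ t) - γ (v₂ t)) with hL₂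
      have hJm := hJ_mono (γ w) (γ w) (γ (v₁ t)) (γ (v₂ t))
      rw [← hL₁, ← hL₂] at hJm
      simp only [sub_self, norm_zero, mul_zero, zero_mul, add_zero] at hJm
      have hnorm : ‖γ (v₁ t) - γ (v₂ t)‖ = (1 - t) * ‖γ D‖ := by
        rw [norm_sub_rev, ← map_sub, hv21 t, map_smul, norm_smul, Real.norm_eq_abs,
          abs_of_pos ht1]
      have hL : L₁ + L₂ ≤ m_α * ((1 - t) * ‖γ D‖) ^ 2 := by
        rw [hnorm] at hJm; exact hJm
      have hp : γ (v₂ t) - γ (v₁ t) = (1 - t) • γ D := by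
        rw [← map_sub, hv21 t, map_smul]
      have hp' : γ (v₁ t) - γ (v₂ t) = (1 - t) • γ (x - y) := by
        have hxyD : x - y = -D := by rw [hD]; abel
        rw [← map_sub]
        have h5 : v₁ t - v₂ t = (1 - t) • (x - y) := by
          rw [hxyD, smul_neg, ← hv21 t, neg_sub]
        rw [h5, map_smul]
      have hmap : Tendsto (fun z : ℝ => z - t) (𝓝[>] t) (𝓝[>] (0:ℝ)) := by
        apply tendsto_nhdsWithin_of_tendsto_nhds_of_eventually_within
        · have h6 : Tendsto (fun z : ℝ => z - t) (𝓝 t) (𝓝 (t - t)) := tendsto_id.sub_const t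
          rw [sub_self] at h6
          exact h6.mono_left nhdsWithin_le_nhds
        · filter_upwards [self_mem_nhdsWithin] with z hz
          exact sub_pos.mpr (Set.mem_Ioi.mp hz)
      have hsub : 𝓝[>] t ≤ 𝓝[≠] t :=
        nhdsWithin_mono t fun z hz => Set.mem_compl_singleton_iff.mpr (Set.mem_Ioi.mp hz).ne'
      -- slope bound for g₁
      have hE1 : ∀ᶠ z in 𝓝[>] t, a * slope g₁ t z < a * (A (v₁ t) (b • D)) + ε := by
        have htend := (hasDerivAt_iff_tendsto_slope.mp (hg₁d t)).const_mul a
        exact ((htend.eventually_lt_const (lt_add_of_pos_right _ hεpos))).filter_mono hsub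
      have hE2 : ∀ᶠ z in 𝓝[>] t, b * slope g₂ t z < b * (A (v₂ t) (a • (x - y))) + ε := by
        have htend := (hasDerivAt_iff_tendsto_slope.mp (hg₂d t)).const_mul b
        exact ((htend.eventually_lt_const (lt_add_of_pos_right _ hεpos))).filter_mono hsub
      -- slope bound for h₁
      have hE3 : ∀ᶠ z in 𝓝[>] t, a * slope h₁ t z < a * ((b / (1 - t)) * L₁) + ε := by
        have hc : 0 < (1 - t) / b := div_pos ht1 hb
        have hcE : ((1 - t) / b) • (b • γ D) = γ (v₂ t) - γ (v₁ t) := by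
          rw [smul_smul, div_mul_cancel₀ _ (ne_of_gt hb), hp]
        have hrr : clarkeDeriv (J (γ w)) (γ (v₁ t)) (((1 - t) / b) • (b • γ D))
            < ((1 - t) / b) * ((b / (1 - t)) * L₁ + ε / a) := by
          rw [hcE, ← hL₁]
          have heq : ((1 - t) / b) * ((b / (1 - t)) * L₁ + ε / a)
              = L₁ + ((1 - t) / b) * (ε / a) := by
            field_simp
          rw [heq]
          have : 0 < ((1 - t) / b) * (ε / a) := by positivity
          linarith
        have hev := eventually_quot_lt (hJ_lip (γ w)) (γ (v₁ t)) (b • γ D) hc hrr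
        have hkey := hmap.eventually hev
        filter_upwards [hkey, self_mem_nhdsWithin] with z hz hzt
        have hfun : slope h₁ t z
            = (J (γ w) (γ (v₁ t) + (z - t) • (b • γ D)) - J (γ w) (γ (v₁ t))) / (z - t) := by
          rw [slope_def_field]
          simp only [hh₁]
          rw [hshift₁ t z]
        rw [hfun]
        have haeq : a * (ε / a) = ε := by field_simp
        have := mul_lt_mul_of_pos_left hz ha
        rw [mul_add, haeq] at this
        exact this
      have hE4 : ∀ᶠ z in 𝓝[>] t, b * slope h₂ t z < b * ((a / (1 - t)) * L₂) + ε := by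
        have hc : 0 < (1 - t) / a := div_pos ht1 ha
        have hcE : ((1 - t) / a) • (a • γ (x - y)) = γ (v₁ t) - γ (v₂ t) := by
          rw [smul_smul, div_mul_cancel₀ _ (ne_of_gt ha), hp']
        have hrr : clarkeDeriv (J (γ w)) (γ (v₂ t)) (((1 - t) / a) • (a • γ (x - y)))
            < ((1 - t) / a) * ((a / (1 - t)) * L₂ + ε / b) := by
          rw [hcE, ← hL₂]
          have heq : ((1 - t) / a) * ((a / (1 - t)) * L₂ + ε / b)
              = L₂ + ((1 - t) / a) * (ε / b) := by
            field_simp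
          rw [heq]
          have : 0 < ((1 - t) / a) * (ε / b) := by positivity
          linarith
        have hev := eventually_quot_lt (hJ_lip (γ w)) (γ (v₂ t)) (a • γ (x - y)) hc hrr
        have hkey := hmap.eventually hev
        filter_upwards [hkey, self_mem_nhdsWithin] with z hz hzt
        have hfun : slope h₂ t z
            = (J (γ w) (γ (v₂ t) + (z - t) • (a • γ (x - y))) - J (γ w) (γ (v₂ t))) / (z - t) := by
          rw [slope_def_field]
          simp only [hh₂]
          rw [hshift₂ t z]
        rw [hfun]
        have hbeq : b * (ε / b) = ε := by field_simp
        have := mul_lt_mul_of_pos_left hz hb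
        rw [mul_add, hbeq] at this
        exact this
      -- sum bound
      have hA1 : A (v₁ t) (b • D) = b * (A (v₁ t) D) := by
        rw [map_smul]; simp [smul_eq_mul]
      have hA2 : A (v₂ t) (a • (x - y)) = -(a * (A (v₂ t) D)) := by
        have hxyD : x - y = -D := by rw [hD]; abel
        rw [hxyD, map_smul, map_neg]
        simp [smul_eq_mul]
      have hmono := hA_mono (v₂ t) (v₁ t)
      rw [hv21 t] at hmono
      have hP2 : m_A * (1 - t) * ‖D‖ ^ 2 ≤ A (v₂ t) D - A (v₁ t) D := by
        simp only [ContinuousLinearMap.sub_apply, map_smul, smul_eq_mul, norm_smul,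
          Real.norm_eq_abs, abs_of_pos ht1] at hmono
        nlinarith [hmono, ht1]
      have hS1 : a * (A (v₁ t) (b • D)) + b * (A (v₂ t) (a • (x - y)))
          = -(a * b * (A (v₂ t) D - A (v₁ t) D)) := by
        rw [hA1, hA2]; ring
      have hS1b : -(a * b * (A (v₂ t) D - A (v₁ t) D)) ≤ -(a * b * ((1 - t) * m_A * ‖D‖ ^ 2)) := by
        have hab0 : (0:ℝ) ≤ a * b := le_of_lt (mul_pos ha hb)
        have := mul_le_mul_of_nonneg_left hP2 hab0
        nlinarith [this]
      have hS2 : a * ((b / (1 - t)) * L₁) + b * ((a / (1 - t)) * L₂)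
          = (a * b / (1 - t)) * (L₁ + L₂) := by
        field_simp
      have hS2b : (a * b / (1 - t)) * (L₁ + L₂) ≤ a * b * (1 - t) * m_α * (‖γ‖ * ‖D‖) ^ 2 := by
        have hab0 : 0 < a * b / (1 - t) := by positivity
        have h1 : (a * b / (1 - t)) * (L₁ + L₂)
            ≤ (a * b / (1 - t)) * (m_α * ((1 - t) * ‖γ D‖) ^ 2) :=
          mul_le_mul_of_nonneg_left hL hab0.le
        have h3 : (a * b / (1 - t)) * (m_α * ((1 - t) * ‖γ D‖) ^ 2)
            = a * b * (1 - t) * m_α * ‖γ D‖ ^ 2 := by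
          field_simp
        have h2 : ‖γ D‖ ≤ ‖γ‖ * ‖D‖ := γ.le_opNorm D
        have h4 : ‖γ D‖ ^ 2 ≤ (‖γ‖ * ‖D‖) ^ 2 := by
          nlinarith [norm_nonneg (γ D)]
        have h5 : a * b * (1 - t) * m_α * ‖γ D‖ ^ 2
            ≤ a * b * (1 - t) * m_α * (‖γ‖ * ‖D‖) ^ 2 := by
          apply mul_le_mul_of_nonneg_left h4
          positivity
        linarith [h1, h3 ▸ h1, h5]
      have hKeq : (a * b * K) * (t - 1)
          = -(a * b * ((1 - t) * m_A * ‖D‖ ^ 2)) + a * b * (1 - t) * m_α * (‖γ‖ * ‖D‖) ^ 2 := by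
        rw [hKdef]; ring
      filter_upwards [hE1, hE2, hE3, hE4] with z hz1 hz2 hz3 hz4
      have hsl : slope ψ t z = a * slope g₁ t z + b * slope g₂ t z
          + a * slope h₁ t z + b * slope h₂ t z := by
        simp only [hψ, slope_def_field]
        ring
      rw [hsl]
      have h5e : 5 * ε = r - (a * b * K) * (t - 1) := by rw [hεdef]; ring
      have hTsum : a * (A (v₁ t) (b • D)) + b * (A (v₂ t) (a • (x - y)))
          + a * ((b / (1 - t)) * L₁) + b * ((a / (1 - t)) * L₂) ≤ (a * b * K) * (t - 1) := by
        rw [hKeq]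
        have e1 : a * (A (v₁ t) (b • D)) + b * (A (v₂ t) (a • (x - y)))
            ≤ -(a * b * ((1 - t) * m_A * ‖D‖ ^ 2)) := by rw [hS1]; exact hS1b
        have e2 : a * ((b / (1 - t)) * L₁) + b * ((a / (1 - t)) * L₂)
            ≤ a * b * (1 - t) * m_α * (‖γ‖ * ‖D‖) ^ 2 := by rw [hS2]; exact hS2b
        linarith [e1, e2]
      linarith [hz1, hz2, hz3, hz4, hTsum, h5e, hεpos]
  -- conclude
  have hψ1 : ψ 1 ≤ ψ 0 + (a * b * K) * ((1:ℝ) ^ 2 / 2 - 1) := main 1 ⟨zero_le_one, le_refl 1⟩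
  have hlt : ψ 1 < ψ 0 := by
    have heq : (a * b * K) * ((1:ℝ) ^ 2 / 2 - 1) = -(a * b * K / 2) := by ring
    rw [heq] at hψ1
    have hpos : 0 < a * b * K := mul_pos (mul_pos ha hb) hKpos
    clear_value ψ K
    linarith
  have hv₁0 : v₁ 0 = x := by simp [hv₁]
  have hv₂0 : v₂ 0 = y := by simp [hv₂]
  have hz1 : v₁ 1 = a • x + b • y := by
    simp only [hv₁, hD]
    rw [hb']
    module
  have hz2 : v₂ 1 = a • x + b • y := by
    simp only [hv₂]
    rw [hb']
    module
  have hψ0 : ψ 0 = a * F_A x + b * F_A y + a * J (γ w) (γ x) + b * J (γ w) (γ y) := by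
    simp only [hψ, hg₁, hg₂, hh₁, hh₂, hv₁0, hv₂0]
  have hψ1' : ψ 1 = F_A (a • x + b • y) + J (γ w) (γ (a • x + b • y)) := by
    simp only [hψ, hg₁, hg₂, hh₁, hh₂, hz1, hz2]
    linear_combination (F_A (a • x + b • y) + J (γ w) (γ (a • x + b • y))) * hab
  have hflin : f (a • x + b • y) = a * f x + b * f y := by
    simp [map_add, map_smul, smul_eq_mul]
  show F_A (a • x + b • y) - f (a • x + b • y) + J (γ w) (γ (a • x + b • y))
      < a • (F_A x - f x + J (γ w) (γ x)) + b • (F_A y - f y + J (γ w) (γ y))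
  simp only [smul_eq_mul]
  have hRHS : a * (F_A x - f x + J (γ w) (γ x)) + b * (F_A y - f y + J (γ w) (γ y))
      = ψ 0 - f (a • x + b • y) := by
    rw [hψ0, hflin]; ring
  have hLHS : F_A (a • x + b • y) - f (a • x + b • y) + J (γ w) (γ (a • x + b • y))
      = ψ 1 - f (a • x + b • y) := by rw [hψ1']; ring
  rw [hLHS, hRHS]
  exact sub_lt_sub_right hlt _
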